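/- Let P be a symmetric positive definite n_u × n_u matrix with eigenvalue bounds λmin(P), λmax(P), and ‖a‖_P := √(aᵀPa). Let ε ∈ (0,1], c_T ∈ (0,1), ℓ_T, ℓ_g, ℓ_{u*} > 0, α₁ > 0, and let: T : ℝ^{n_u} × ℝ^{n_y} → ℝ^{n_u} with ‖T(u,y) − T(u,y')‖ ≤ ℓ_T‖y − y'‖; g with ‖g(x,w) − g(x',w)‖ ≤ ℓ_g‖x − x'‖; h(u,w) := g(x_ss(u,w), w); T̃(u,w) := T(u, h(u,w)); u* with u*(w) = T̃(u*(w), w), ‖T̃(u,w) − u*(w)‖_P ≤ c_T‖u − u*(w)‖_P, and ‖u*(w') − u*(w)‖ ≤ ℓ_{u*}‖w' − w‖; and V with α₁‖x − x_ss(u,w)‖² ≤ V(x,u,w), W := √V. If u^{k+1} = (1−ε)u^k + ε·T(u^k, y^{k+1}) with y^{k+1} = g(x^{k+1}, w^{k+1}), then ‖u^{k+1} − u^k‖ ≤ ε·(1 + c_T)·λmin(P)^{-1/2}·(‖u^k − u*(w^k)‖_P + √(λmax(P))·ℓ_{u*}·‖w^{k+1} − w^k‖) + ε·(ℓ_T·ℓ_g/√α₁)·W(x^{k+1},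 u^k, w^{k+1}). -/

import Mathlib

/-- Largest eigenvalue of a Hermitian (symmetric) real matrix. -/
noncomputable def eigMax {n : ℕ} {P : Matrix (Fin n) (Fin n) ℝ} (hP : P.IsHermitian) : ℝ :=
  ⨆ i, hP.eigenvalues i

/-- Smallest eigenvalue of a Hermitian (symmetric) real matrix. -/
noncomputable def eigMin {n : ℕ} {P : Matrix (Fin n) (Fin n) ℝ} (hP : P.IsHermitian) : ℝ :=
  ⨅ i, hP.eigenvalues i

/-- The `P`-weighted norm `‖a‖_P = √(aᵀ P a)`. -/
noncomputable def pnorm {n : ℕ} (P : Matrix (Fin n) (Fin n) ℝ) (a : EuclideanSpace ℝ (Fin n)) : ℝ :=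
  Real.sqrt (dotProduct (fun i => a i) (P.mulVec fun i => a i))

open Matrix Finset

section helpers

variable {n : ℕ} {P : Matrix (Fin n) (Fin n) ℝ}

lemma quad_eq_sum (hP : P.IsHermitian) (a : EuclideanSpace ℝ (Fin n)) :
    dotProduct (fun i => a i) (P.mulVec fun i => a i)
      = ∑ j, hP.eigenvalues j * (hP.eigenvectorBasis.repr a j)^2 := by
  classical
  set b := hP.eigenvectorBasis with hb
  set c : Fin n → ℝ := fun j => b.repr a j with hc
  set L : EuclideanSpace ℝ (Fin n) →ₗ[ℝ] (Fin n → ℝ) :=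
    P.mulVecLin ∘ₗ (WithLp.linearEquiv 2 ℝ (Fin n → ℝ)).toLinearMap with hL
  have hLa : P.mulVec (fun i => a i) = L a := rfl
  have hmv : P.mulVec (fun i => a i) = ∑ j, fun i => (c j * hP.eigenvalues j) * b j i := by
    rw [hLa, ← b.sum_repr a, map_sum]
    refine Finset.sum_congr rfl fun j _ => ?_
    have hLb : L (c j • b j) = c j • (hP.eigenvalues j • fun i => b j i) := by
      rw [_root_.map_smul]
      congr 1
      have := hP.mulVec_eigenvectorBasis j
      simpa [hL, Matrix.mulVecLin_apply] using this
    rw [hLb]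
    funext i
    simp [smul_eq_mul]; ring
  have hdotb : ∀ j, ∑ i, a i * b j i = c j := by
    intro j
    have h3 : (inner ℝ (b j) a : ℝ) = c j := (b.repr_apply_apply a j).symm
    rw [← h3, real_inner_comm]
    simp [PiLp.inner_apply, RCLike.inner_apply, mul_comm]
  rw [hmv]
  simp only [dotProduct, Finset.sum_apply, Finset.mul_sum]
  rw [Finset.sum_comm]
  refine Finset.sum_congr rfl fun j _ => ?_
  have : ∀ i, a i * (c j * hP.eigenvalues j * b j i)
      = (c j * hP.eigenvalues j) * (a i * b j i) := fun i => by ring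
  simp only [this]
  rw [← Finset.mul_sum, hdotb j]
  ring

lemma norm_sq_eq_sum_repr (hP : P.IsHermitian) (a : EuclideanSpace ℝ (Fin n)) :
    ‖a‖^2 = ∑ j, (hP.eigenvectorBasis.repr a j)^2 := by
  have h1 : ‖a‖ = ‖hP.eigenvectorBasis.repr a‖ := (hP.eigenvectorBasis.repr.norm_map a).symm
  rw [h1, EuclideanSpace.norm_eq, Real.sq_sqrt (by positivity)]
  simp [sq_abs]

end helpers

section helpers2
variable {n : ℕ} {P : Matrix (Fin n) (Fin n) ℝ}

lemma quad_le_eigMax (hP : P.PosDef) (a : EuclideanSpace ℝ (Fin n)) :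
    dotProduct (fun i => a i) (P.mulVec fun i => a i) ≤ eigMax hP.1 * ‖a‖^2 := by
  rw [quad_eq_sum hP.1 a, norm_sq_eq_sum_repr hP.1 a, Finset.mul_sum]
  refine Finset.sum_le_sum fun j _ => ?_
  have h1 : hP.1.eigenvalues j ≤ eigMax hP.1 :=
    le_ciSup (Set.Finite.bddAbove (Set.finite_range _)) j
  nlinarith [sq_nonneg (hP.1.eigenvectorBasis.repr a j)]

lemma eigMin_le_quad (hP : P.PosDef) (a : EuclideanSpace ℝ (Fin n)) :
    eigMin hP.1 * ‖a‖^2 ≤ dotProduct (fun i => a i) (P.mulVec fun i => a i) := by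
  rw [quad_eq_sum hP.1 a, norm_sq_eq_sum_repr hP.1 a, Finset.mul_sum]
  refine Finset.sum_le_sum fun j _ => ?_
  have h1 : eigMin hP.1 ≤ hP.1.eigenvalues j :=
    ciInf_le (Set.Finite.bddBelow (Set.finite_range _)) j
  nlinarith [sq_nonneg (hP.1.eigenvectorBasis.repr a j)]

lemma eigMin_pos (hn : 0 < n) (hP : P.PosDef) : 0 < eigMin hP.1 := by
  have : Nonempty (Fin n) := Fin.pos_iff_nonempty.mp hn
  obtain ⟨j, hj⟩ := Finite.exists_min hP.1.eigenvalues
  have h1 : hP.1.eigenvalues j ≤ eigMin hP.1 := le_ciInf hj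
  exact lt_of_lt_of_le (hP.eigenvalues_pos j) h1

lemma eigMax_nonneg (hn : 0 < n) (hP : P.PosDef) : 0 ≤ eigMax hP.1 := by
  have : Nonempty (Fin n) := Fin.pos_iff_nonempty.mp hn
  obtain ⟨j⟩ := this
  exact le_trans (hP.eigenvalues_pos j).le (le_ciSup (Set.Finite.bddAbove (Set.finite_range _)) j)

lemma pnorm_le_sqrt_eigMax (hn : 0 < n) (hP : P.PosDef) (a : EuclideanSpace ℝ (Fin n)) :
    pnorm P a ≤ Real.sqrt (eigMax hP.1) * ‖a‖ := by
  rw [pnorm]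
  calc Real.sqrt (dotProduct (fun i => a i) (P.mulVec fun i => a i))
      ≤ Real.sqrt (eigMax hP.1 * ‖a‖^2) := Real.sqrt_le_sqrt (quad_le_eigMax hP a)
    _ = Real.sqrt (eigMax hP.1) * ‖a‖ := by
        rw [Real.sqrt_mul (eigMax_nonneg hn hP), Real.sqrt_sq (norm_nonneg a)]

lemma sqrt_eigMin_mul_norm_le_pnorm (hn : 0 < n) (hP : P.PosDef) (a : EuclideanSpace ℝ (Fin n)) :
    Real.sqrt (eigMin hP.1) * ‖a‖ ≤ pnorm P a := by
  rw [pnorm]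
  calc Real.sqrt (eigMin hP.1) * ‖a‖
      = Real.sqrt (eigMin hP.1 * ‖a‖^2) := by
        rw [Real.sqrt_mul (eigMin_pos hn hP).le, Real.sqrt_sq (norm_nonneg a)]
    _ ≤ _ := Real.sqrt_le_sqrt (eigMin_le_quad hP a)

lemma norm_le_inv_sqrt_eigMin_mul_pnorm (hn : 0 < n) (hP : P.PosDef)
    (a : EuclideanSpace ℝ (Fin n)) :
    ‖a‖ ≤ (Real.sqrt (eigMin hP.1))⁻¹ * pnorm P a := by
  have h0 : 0 < Real.sqrt (eigMin hP.1) := Real.sqrt_pos.mpr (eigMin_pos hn hP)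
  rw [← div_eq_inv_mul, le_div_iff₀ h0, mul_comm]
  exact sqrt_eigMin_mul_norm_le_pnorm hn hP a

open scoped MatrixOrder in
lemma pnorm_eq_norm (hP : P.PosSemidef) (a : EuclideanSpace ℝ (Fin n)) :
    pnorm P a = ‖(WithLp.equiv 2 (Fin n → ℝ)).symm ((CFC.sqrt P).mulVec fun i => a i)‖ := by
  have hsymm : (CFC.sqrt P)ᵀ = CFC.sqrt P := by
    have := (CFC.sqrt_nonneg P).posSemidef.1
    rwa [Matrix.IsHermitian, Matrix.conjTranspose_eq_transpose_of_trivial] at this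
  rw [pnorm, EuclideanSpace.norm_eq]
  congr 1
  conv_lhs => rw [← CFC.sqrt_mul_sqrt_self P hP.nonneg, ← Matrix.mulVec_mulVec, dotProduct_mulVec,
    ← Matrix.mulVec_transpose, hsymm]
  simp [dotProduct, sq_abs, pow_two]

lemma pnorm_nonneg (a : EuclideanSpace ℝ (Fin n)) : 0 ≤ pnorm P a := Real.sqrt_nonneg _

lemma pnorm_sub_le (hP : P.PosSemidef) (x y z : EuclideanSpace ℝ (Fin n)) :
    pnorm P (x - z) ≤ pnorm P (x - y) + pnorm P (y - z) := by
  rw [pnorm_eq_norm hP, pnorm_eq_norm hP, pnorm_eq_norm hP]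
  have h1 : (fun i => (x - z) i) = (fun i => (x - y) i) + fun i => (y - z) i := by
    funext i; simp
  rw [h1, Matrix.mulVec_add, WithLp.equiv_symm_apply, WithLp.toLp_add]
  exact norm_add_le _ _

lemma pnorm_neg (hP : P.PosSemidef) (x y : EuclideanSpace ℝ (Fin n)) :
    pnorm P (x - y) = pnorm P (y - x) := by
  rw [pnorm_eq_norm hP, pnorm_eq_norm hP]
  have h1 : (fun i => (x - y) i) = -fun i => (y - x) i := by funext i; simp
  rw [h1, Matrix.mulVec_neg, WithLp.equiv_symm_apply, WithLp.toLp_neg, norm_neg]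

end helpers2

/-- The bound (chain (33), up to step (s.4)) on the one-step control increment
`‖u^{k+1} - u^k‖` in the proof of Theorem 1. -/
theorem stmt7 {nx nu nw ny : ℕ} (hnu : 0 < nu)
    (P : Matrix (Fin nu) (Fin nu) ℝ) (hP : P.PosDef)
    (ε cT ℓT ℓg ℓus α₁ : ℝ)
    (hε0 : 0 < ε) (hε1 : ε ≤ 1) (hcT : cT ∈ Set.Ioo (0:ℝ) 1)
    (hℓT : 0 < ℓT) (hℓg : 0 < ℓg) (hℓus : 0 < ℓus) (hα₁ : 0 < α₁)
    (T : EuclideanSpace ℝ (Fin nu) → EuclideanSpace ℝ (Fin ny) → EuclideanSpace ℝ (Fin nu))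
    (hT : ∀ u y y', ‖T u y - T u y'‖ ≤ ℓT * ‖y - y'‖)
    (g : EuclideanSpace ℝ (Fin nx) → EuclideanSpace ℝ (Fin nw) → EuclideanSpace ℝ (Fin ny))
    (hg : ∀ x x' w, ‖g x w - g x' w‖ ≤ ℓg * ‖x - x'‖)
    (xss : EuclideanSpace ℝ (Fin nu) → EuclideanSpace ℝ (Fin nw) → EuclideanSpace ℝ (Fin nx))
    (ustar : EuclideanSpace ℝ (Fin nw) → EuclideanSpace ℝ (Fin nu))
    (hfix : ∀ w, ustar w = T (ustar w) (g (xss (ustar w) w) w))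
    (hcontr : ∀ u w,
      pnorm P (T u (g (xss u w) w) - ustar w) ≤ cT * pnorm P (u - ustar w))
    (hustarLip : ∀ w w', ‖ustar w' - ustar w‖ ≤ ℓus * ‖w' - w‖)
    (V : EuclideanSpace ℝ (Fin nx) → EuclideanSpace ℝ (Fin nu) → EuclideanSpace ℝ (Fin nw) → ℝ)
    (hV : ∀ x u w, α₁ * ‖x - xss u w‖^2 ≤ V x u w)
    (xk1 : EuclideanSpace ℝ (Fin nx)) (uk uk1 : EuclideanSpace ℝ (Fin nu))
    (wk wk1 : EuclideanSpace ℝ (Fin nw))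
    (hupd : uk1 = (1-ε) • uk + ε • T uk (g xk1 wk1)) :
    ‖uk1 - uk‖ ≤
      ε * (1 + cT) * (Real.sqrt (eigMin hP.1))⁻¹ *
          (pnorm P (uk - ustar wk) + Real.sqrt (eigMax hP.1) * ℓus * ‖wk1 - wk‖)
        + ε * (ℓT * ℓg / Real.sqrt α₁) * Real.sqrt (V xk1 uk wk1) := by
  set t := T uk (g xk1 wk1) with ht
  set Tt := T uk (g (xss uk wk1) wk1) with hTt
  set sm := Real.sqrt (eigMin hP.1) with hsm
  set sM := Real.sqrt (eigMax hP.1) with hsM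
  set sV := Real.sqrt (V xk1 uk wk1) with hsV
  set X := pnorm P (uk - ustar wk) with hX
  set Y := ‖wk1 - wk‖ with hY
  have hsm0 : 0 < sm := Real.sqrt_pos.mpr (eigMin_pos hnu hP)
  have hsM0 : 0 ≤ sM := Real.sqrt_nonneg _
  have hsa : 0 < Real.sqrt α₁ := Real.sqrt_pos.mpr hα₁
  -- step 0
  have h0 : ‖uk1 - uk‖ = ε * ‖t - uk‖ := by
    have hd : uk1 - uk = ε • (t - uk) := by rw [hupd]; module
    rw [hd, norm_smul, Real.norm_eq_abs, abs_of_pos hε0]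
  -- disturbance/state part
  have hVpos : 0 ≤ V xk1 uk wk1 := le_trans (by positivity) (hV xk1 uk wk1)
  have hBx : ‖xk1 - xss uk wk1‖ ≤ sV / Real.sqrt α₁ := by
    rw [hsV, ← Real.sqrt_div hVpos α₁,
      show ‖xk1 - xss uk wk1‖ = Real.sqrt (‖xk1 - xss uk wk1‖^2) from
        (Real.sqrt_sq (norm_nonneg _)).symm]
    apply Real.sqrt_le_sqrt
    rw [le_div_iff₀ hα₁]
    nlinarith [hV xk1 uk wk1]
  have hA : ‖t - Tt‖ ≤ ℓT * ℓg / Real.sqrt α₁ * sV := by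
    calc ‖t - Tt‖ ≤ ℓT * ‖g xk1 wk1 - g (xss uk wk1) wk1‖ := hT uk _ _
      _ ≤ ℓT * (ℓg * ‖xk1 - xss uk wk1‖) :=
          mul_le_mul_of_nonneg_left (hg xk1 (xss uk wk1) wk1) hℓT.le
      _ ≤ ℓT * (ℓg * (sV / Real.sqrt α₁)) := by gcongr
      _ = ℓT * ℓg / Real.sqrt α₁ * sV := by ring
  -- P-norm part
  have hG : pnorm P (uk - ustar wk1) ≤ X + sM * ℓus * Y := by
    calc pnorm P (uk - ustar wk1)
        ≤ pnorm P (uk - ustar wk) + pnorm P (ustar wk - ustar wk1) :=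
          pnorm_sub_le hP.posSemidef _ _ _
      _ ≤ X + sM * ℓus * Y := by
          have h1 : pnorm P (ustar wk - ustar wk1) ≤ sM * ‖ustar wk - ustar wk1‖ :=
            pnorm_le_sqrt_eigMax hnu hP _
          have h2 : ‖ustar wk - ustar wk1‖ ≤ ℓus * Y := by
            rw [norm_sub_rev]; exact hustarLip wk wk1
          have h3 : sM * ‖ustar wk - ustar wk1‖ ≤ sM * (ℓus * Y) :=
            mul_le_mul_of_nonneg_left h2 hsM0
          rw [hX]; nlinarith
  have hD : pnorm P (Tt - uk) ≤ (1 + cT) * (X + sM * ℓus * Y) := by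
    have h1 : pnorm P (Tt - uk) ≤ pnorm P (Tt - ustar wk1) + pnorm P (ustar wk1 - uk) :=
      pnorm_sub_le hP.posSemidef _ _ _
    have h2 : pnorm P (Tt - ustar wk1) ≤ cT * pnorm P (uk - ustar wk1) := hcontr uk wk1
    have h3 : pnorm P (ustar wk1 - uk) = pnorm P (uk - ustar wk1) :=
      pnorm_neg hP.posSemidef _ _
    have h4 : cT * pnorm P (uk - ustar wk1) ≤ cT * (X + sM * ℓus * Y) :=
      mul_le_mul_of_nonneg_left hG hcT.1.le
    nlinarith
  have hC : ‖Tt - uk‖ ≤ sm⁻¹ * ((1 + cT) * (X + sM * ℓus * Y)) := by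
    calc ‖Tt - uk‖ ≤ sm⁻¹ * pnorm P (Tt - uk) :=
          norm_le_inv_sqrt_eigMin_mul_pnorm hnu hP _
      _ ≤ sm⁻¹ * ((1 + cT) * (X + sM * ℓus * Y)) :=
          mul_le_mul_of_nonneg_left hD (by positivity)
  -- combine
  have htri : ‖t - uk‖ ≤ ‖t - Tt‖ + ‖Tt - uk‖ := norm_sub_le_norm_sub_add_norm_sub t Tt uk
  have hfin : ‖t - uk‖ ≤ sm⁻¹ * ((1 + cT) * (X + sM * ℓus * Y)) + ℓT * ℓg / Real.sqrt α₁ * sV := by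
    linarith
  calc ‖uk1 - uk‖ = ε * ‖t - uk‖ := h0
    _ ≤ ε * (sm⁻¹ * ((1 + cT) * (X + sM * ℓus * Y)) + ℓT * ℓg / Real.sqrt α₁ * sV) :=
        mul_le_mul_of_nonneg_left hfin hε0.le
    _ = ε * (1 + cT) * sm⁻¹ * (X + sM * ℓus * Y) + ε * (ℓT * ℓg / Real.sqrt α₁) * sV := by ring
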